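/- Let k be a field and f, g : H → K two morphisms of k-Hopf algebras. Set S := {h ∈ H | f(h) = g(h)} and let D be the sum of all subcoalgebras of H contained in S, which is a Hopf subalgebra of H. Then the pair (D, i), with i : D → H the canonical inclusion, is an equalizer of f and g in the category of k-Hopf algebras. -/

import Mathlib

universe u v w

/-- `V` is a subcoalgebra of the coalgebra `C`: the comultiplication maps `V` into
the image of `V ⊗ V` in `C ⊗ C`. -/
def IsSubcoalgebra {k : Type u} [CommRing k] {C : Type v} [AddCommGroup C] [Module k C]
    [Coalgebra k C] (V : Submodule k C) : Prop :=
  ∀ v ∈ V, Coalgebra.comul (R := k) v ∈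
    LinearMap.range (TensorProduct.map V.subtype V.subtype)



open TensorProduct Coalgebra LinearMap

section Conv
variable {R : Type*} [CommSemiring R]
variable {C : Type*} [AddCommMonoid C] [Module R C] [Coalgebra R C]
variable {A : Type*} [Semiring A] [Algebra R A]

/-- Convolution product of linear maps from a coalgebra to an algebra. -/
noncomputable def conv (f g : C →ₗ[R] A) : C →ₗ[R] A :=
  LinearMap.mul' R A ∘ₗ TensorProduct.map f g ∘ₗ Coalgebra.comul

noncomputable def convUnit : C →ₗ[R] A := Algebra.linearMap R A ∘ₗ Coalgebra.counit

lemma conv_repr (f g : C →ₗ[R] A) (a : C) (r : Coalgebra.Repr R a (C × C)) :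
    conv f g a = ∑ i ∈ r.index, f (r.left i) * g (r.right i) := by
  simp only [conv, LinearMap.comp_apply, ← r.eq, map_sum, TensorProduct.map_tmul,
    LinearMap.mul'_apply]

lemma convUnit_apply (a : C) : convUnit (R := R) (A := A) a = algebraMap R A (counit a) := rfl

lemma conv_convUnit (f : C →ₗ[R] A) : conv f convUnit = f := by
  ext a
  let r := ℛ R a
  rw [conv_repr f convUnit a r]
  have h := Coalgebra.sum_tmul_counit_eq (R := R) r
  have h2 := congrArg (fun t => (f ∘ₗ (TensorProduct.rid R C).toLinearMap)
    ((TensorProduct.map LinearMap.id (LinearMap.id (M := R))) t)) h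
  simp only [map_sum, TensorProduct.map_tmul, LinearMap.comp_apply, LinearMap.id_coe, id_eq,
    LinearEquiv.coe_coe, TensorProduct.rid_tmul, map_smul, one_smul] at h2
  rw [← h2]
  refine Finset.sum_congr rfl fun i _ => ?_
  rw [convUnit_apply, Algebra.smul_def, ← Algebra.commutes]

lemma convUnit_conv (f : C →ₗ[R] A) : conv convUnit f = f := by
  ext a
  let r := ℛ R a
  rw [conv_repr convUnit f a r]
  have h := Coalgebra.sum_counit_tmul_eq (R := R) r
  have h2 := congrArg (fun t => (f ∘ₗ (TensorProduct.lid R C).toLinearMap) t) h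
  simp only [map_sum, LinearMap.comp_apply, LinearEquiv.coe_coe, TensorProduct.lid_tmul,
    map_smul, one_smul] at h2
  rw [← h2]
  refine Finset.sum_congr rfl fun i _ => ?_
  rw [convUnit_apply, Algebra.smul_def]

lemma conv_assoc (f g h : C →ₗ[R] A) : conv (conv f g) h = conv f (conv g h) := by
  ext a
  let r := ℛ R a
  let a₁ : (i : r.ι) → Coalgebra.Repr R (r.left i) (C × C) := fun i => ℛ R (r.left i)
  let a₂ : (i : r.ι) → Coalgebra.Repr R (r.right i) (C × C) := fun i => ℛ R (r.right i)
  have key := Coalgebra.sum_tmul_tmul_eq (R := R) r a₁ a₂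
  have := congrArg (fun t => LinearMap.mul' R A ((LinearMap.lTensor A (LinearMap.mul' R A))
      ((TensorProduct.map f (TensorProduct.map g h)) t))) key
  simp only [map_sum, TensorProduct.map_tmul, LinearMap.lTensor_tmul, LinearMap.mul'_apply] at this
  rw [conv_repr (conv f g) h a r, conv_repr f (conv g h) a r]
  calc ∑ i ∈ r.index, conv f g (r.left i) * h (r.right i)
      = ∑ i ∈ r.index, ∑ j ∈ (a₁ i).index,
          f ((a₁ i).left j) * ((g ((a₁ i).right j)) * h (r.right i)) := by
        refine Finset.sum_congr rfl fun i _ => ?_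
        rw [conv_repr f g _ (a₁ i), Finset.sum_mul]
        simp [mul_assoc]
    _ = ∑ i ∈ r.index, ∑ j ∈ (a₂ i).index,
          f (r.left i) * (g ((a₂ i).left j) * h ((a₂ i).right j)) := this
    _ = ∑ i ∈ r.index, f (r.left i) * conv g h (r.right i) := by
        refine Finset.sum_congr rfl fun i _ => ?_
        rw [conv_repr g h _ (a₂ i), Finset.mul_sum]

lemma conv_inv_unique {f x y : C →ₗ[R] A} (h1 : conv x f = convUnit)
    (h2 : conv f y = convUnit) : x = y := by
  calc x = conv x convUnit := (conv_convUnit x).symm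
  _ = conv x (conv f y) := by rw [h2]
  _ = conv (conv x f) y := (conv_assoc x f y).symm
  _ = conv convUnit y := by rw [h1]
  _ = y := convUnit_conv y

variable {C' : Type*} [AddCommMonoid C'] [Module R C'] [Coalgebra R C']
variable {B : Type*} [Semiring B] [Algebra R B]

lemma conv_comp_coalgHom (f g : C →ₗ[R] A) (φ : C' →ₗc[R] C) :
    conv (f ∘ₗ (φ : C' →ₗ[R] C)) (g ∘ₗ (φ : C' →ₗ[R] C)) = conv f g ∘ₗ (φ : C' →ₗ[R] C) := by
  rw [conv, conv, TensorProduct.map_comp]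
  rw [LinearMap.comp_assoc, LinearMap.comp_assoc, CoalgHomClass.map_comp_comul φ]
  rw [← LinearMap.comp_assoc, ← LinearMap.comp_assoc]
  rfl

lemma algHom_comp_conv (f g : C →ₗ[R] A) (ψ : A →ₐ[R] B) :
    conv (ψ.toLinearMap ∘ₗ f) (ψ.toLinearMap ∘ₗ g) = ψ.toLinearMap ∘ₗ conv f g := by
  ext a
  rw [LinearMap.comp_apply, conv_repr f g a (ℛ R a),
    conv_repr (ψ.toLinearMap ∘ₗ f) (ψ.toLinearMap ∘ₗ g) a (ℛ R a), map_sum]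
  simp

lemma convUnit_comp_coalgHom (φ : C' →ₗc[R] C) :
    (convUnit (R := R) (C := C) (A := A)) ∘ₗ (φ : C' →ₗ[R] C) = convUnit := by
  rw [convUnit, LinearMap.comp_assoc, CoalgHomClass.counit_comp, ← convUnit]

lemma algHom_comp_convUnit (ψ : A →ₐ[R] B) :
    ψ.toLinearMap ∘ₗ (convUnit (R := R) (C := C) (A := A)) = convUnit := by
  ext a; simp [convUnit_apply, AlgHom.commutes]

end Conv

section Antipode

variable {R : Type*} [CommSemiring R] {H : Type*} [Semiring H] [HopfAlgebra R H]

local notation "S" => HopfAlgebra.antipode (R := R) (A := H)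

lemma conv_antipode_id : conv S (LinearMap.id (M := H)) = convUnit := by
  rw [conv, convUnit, ← HopfAlgebra.mul_antipode_rTensor_comul (R := R) (A := H)]
  rfl

lemma conv_id_antipode : conv (LinearMap.id (M := H)) S = convUnit := by
  rw [conv, convUnit, ← HopfAlgebra.mul_antipode_lTensor_comul (R := R) (A := H)]
  rfl

variable {K : Type*} [Semiring K] [HopfAlgebra R K]

/-- Bialgebra morphisms between Hopf algebras commute with the antipode. -/
lemma antipode_comp_bialgHom (f : H →ₐc[R] K) :
    HopfAlgebra.antipode (R := R) ∘ₗ (f.toCoalgHom : H →ₗ[R] K)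
      = (f.toCoalgHom : H →ₗ[R] K) ∘ₗ S := by
  set fl : H →ₗ[R] K := (f.toCoalgHom : H →ₗ[R] K) with hfl
  have hAlg : (AlgHomClass.toAlgHom f).toLinearMap = fl := by
    apply LinearMap.ext; intro x; rfl
  refine conv_inv_unique (f := fl) ?_ ?_
  · have h0 : conv (HopfAlgebra.antipode (R := R) ∘ₗ fl) (LinearMap.id ∘ₗ fl) =
        conv (HopfAlgebra.antipode (R := R) (A := K)) LinearMap.id ∘ₗ fl :=
      conv_comp_coalgHom _ _ f.toCoalgHom
    rw [LinearMap.id_comp] at h0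
    rw [h0, conv_antipode_id]
    exact convUnit_comp_coalgHom f.toCoalgHom
  · have h0 : conv ((AlgHomClass.toAlgHom f).toLinearMap ∘ₗ LinearMap.id)
        ((AlgHomClass.toAlgHom f).toLinearMap ∘ₗ S) =
        (AlgHomClass.toAlgHom f).toLinearMap ∘ₗ conv LinearMap.id S :=
      algHom_comp_conv _ _ (AlgHomClass.toAlgHom f)
    rw [LinearMap.comp_id, hAlg] at h0
    rw [h0, conv_id_antipode, ← hAlg, algHom_comp_convUnit]


/-- The "opposite comultiplication composed with S⊗S" map. -/
noncomputable def antiComul : H →ₗ[R] H ⊗[R] H :=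
  (TensorProduct.comm R H H).toLinearMap ∘ₗ TensorProduct.map S S ∘ₗ Coalgebra.comul

/-- Key computation: `μ_{H⊗H} ∘ (id ⊗ G) ∘ α⁻¹ ∘ (id ⊗ Δ) = (· ⊗ 1) ∘ μ ∘ (id ⊗ S)`. -/
lemma key_lemma :
    (LinearMap.mul' R (H ⊗[R] H)) ∘ₗ ((antiComul (R := R) (H := H)).lTensor (H ⊗[R] H)) ∘ₗ
        (TensorProduct.assoc R H H H).symm.toLinearMap ∘ₗ
        ((Coalgebra.comul (R := R) (A := H)).lTensor H) =
      ((TensorProduct.mk R H H).flip 1) ∘ₗ (LinearMap.mul' R H) ∘ₗ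
        ((HopfAlgebra.antipode (R := R) (A := H)).lTensor H) := by
  apply TensorProduct.ext'
  intro a y
  -- abbreviations
  set r : Coalgebra.Repr R y (H × H) := ℛ R y with hr
  set a₁ : (i : r.ι) → Coalgebra.Repr R (r.left i) (H × H) := fun i => ℛ R (r.left i) with ha₁
  set a₂ : (i : r.ι) → Coalgebra.Repr R (r.right i) (H × H) := fun i => ℛ R (r.right i) with ha₂
  -- the auxiliary linear map Ψ
  set Ψ : H ⊗[R] (H ⊗[R] H) →ₗ[R] H ⊗[R] H :=
    (LinearMap.mul' R (H ⊗[R] H)) ∘ₗ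
      TensorProduct.map (TensorProduct.mk R H H a)
        ((TensorProduct.comm R H H).toLinearMap ∘ₗ
          TensorProduct.map (HopfAlgebra.antipode (R := R)) (HopfAlgebra.antipode (R := R)))
    with hΨ
  have hΨ_apply : ∀ (p q s : H), Ψ (p ⊗ₜ[R] (q ⊗ₜ[R] s)) =
      (a * HopfAlgebra.antipode (R := R) s) ⊗ₜ[R] (p * HopfAlgebra.antipode (R := R) q) := by
    intro p q s
    simp [hΨ, Algebra.TensorProduct.tmul_mul_tmul]
  -- LHS computation
  have hLHS : (LinearMap.mul' R (H ⊗[R] H)) (((antiComul (R := R) (H := H)).lTensor (H ⊗[R] H))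
      (((TensorProduct.assoc R H H H).symm.toLinearMap)
        (((Coalgebra.comul (R := R) (A := H)).lTensor H) (a ⊗ₜ[R] y)))) =
      ∑ i ∈ r.index, ∑ j ∈ (a₂ i).index,
        (a * HopfAlgebra.antipode (R := R) ((a₂ i).right j)) ⊗ₜ[R]
          (r.left i * HopfAlgebra.antipode (R := R) ((a₂ i).left j)) := by
    rw [LinearMap.lTensor_tmul, ← r.eq, TensorProduct.tmul_sum]
    rw [map_sum, map_sum, map_sum]
    refine Finset.sum_congr rfl fun i _ => ?_
    rw [LinearEquiv.coe_toLinearMap, TensorProduct.assoc_symm_tmul, LinearMap.lTensor_tmul]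
    rw [antiComul, LinearMap.comp_apply, LinearMap.comp_apply, ← (a₂ i).eq, map_sum, map_sum,
      TensorProduct.tmul_sum, map_sum]
    refine Finset.sum_congr rfl fun j _ => ?_
    simp [Algebra.TensorProduct.tmul_mul_tmul]
  -- use coassociativity via Ψ
  have key := Coalgebra.sum_tmul_tmul_eq (R := R) r a₁ a₂
  have key2 := congrArg Ψ key
  rw [map_sum, map_sum] at key2
  simp only [map_sum, hΨ_apply] at key2
  -- now collapse the left-hand side of key2
  have collapse : ∀ i ∈ r.index, ∑ j ∈ (a₁ i).index,
      (a * HopfAlgebra.antipode (R := R) (r.right i)) ⊗ₜ[R]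
        ((a₁ i).left j * HopfAlgebra.antipode (R := R) ((a₁ i).right j)) =
      Coalgebra.counit (R := R) (r.left i) •
        ((a * HopfAlgebra.antipode (R := R) (r.right i)) ⊗ₜ[R] (1 : H)) := by
    intro i _
    rw [← TensorProduct.tmul_sum, HopfAlgebra.sum_mul_antipode_eq_algebraMap_counit (a₁ i),
      Algebra.algebraMap_eq_smul_one, TensorProduct.tmul_smul]
  rw [Finset.sum_congr rfl collapse] at key2
  -- identify the collapsed sum with (a * S y) ⊗ 1
  set μa : H →ₗ[R] H ⊗[R] H :=
    ((TensorProduct.mk R H H).flip 1) ∘ₗ (LinearMap.mulLeft R a) ∘ₗ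
      (HopfAlgebra.antipode (R := R)) with hμa
  have hμa_apply : ∀ z : H, μa z = (a * HopfAlgebra.antipode (R := R) z) ⊗ₜ[R] (1 : H) := by
    intro z; simp [hμa]
  have hcounit : ∑ i ∈ r.index, Coalgebra.counit (R := R) (r.left i) • r.right i = y := by
    have h := Coalgebra.sum_counit_tmul_eq (R := R) r
    have h2 := congrArg (TensorProduct.lid R H).toLinearMap h
    simp only [map_sum, LinearEquiv.coe_toLinearMap, TensorProduct.lid_tmul, one_smul] at h2
    exact h2
  have final : ∑ i ∈ r.index, Coalgebra.counit (R := R) (r.left i) •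
      ((a * HopfAlgebra.antipode (R := R) (r.right i)) ⊗ₜ[R] (1 : H)) =
      (a * HopfAlgebra.antipode (R := R) y) ⊗ₜ[R] (1 : H) := by
    calc ∑ i ∈ r.index, Coalgebra.counit (R := R) (r.left i) •
        ((a * HopfAlgebra.antipode (R := R) (r.right i)) ⊗ₜ[R] (1 : H))
        = ∑ i ∈ r.index, μa (Coalgebra.counit (R := R) (r.left i) • r.right i) := by
          refine Finset.sum_congr rfl fun i _ => ?_
          rw [map_smul, hμa_apply]
      _ = μa (∑ i ∈ r.index, Coalgebra.counit (R := R) (r.left i) • r.right i) := by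
          rw [map_sum]
      _ = (a * HopfAlgebra.antipode (R := R) y) ⊗ₜ[R] (1 : H) := by rw [hcounit, hμa_apply]
  -- put everything together
  simp only [LinearMap.comp_apply]
  rw [hLHS, ← key2, final]
  simp [LinearMap.lTensor_tmul]

/-- `Δ ∘ S = τ ∘ (S ⊗ S) ∘ Δ`. -/
lemma comul_antipode :
    (Coalgebra.comul (R := R) (A := H)) ∘ₗ S = antiComul := by
  refine conv_inv_unique (f := Coalgebra.comul (R := R) (A := H)) ?_ ?_
  · -- conv (Δ ∘ S) Δ = u
    have h := algHom_comp_conv (R := R) (HopfAlgebra.antipode (R := R) (A := H))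
      LinearMap.id (Bialgebra.comulAlgHom R H)
    have hc : (Bialgebra.comulAlgHom R H).toLinearMap = Coalgebra.comul (R := R) (A := H) := rfl
    rw [hc, LinearMap.comp_id, conv_antipode_id] at h
    rw [h, ← hc, algHom_comp_convUnit]
  · -- conv Δ G = u
    rw [conv]
    have hfact : TensorProduct.map (Coalgebra.comul (R := R) (A := H)) antiComul =
        ((antiComul (R := R) (H := H)).lTensor (H ⊗[R] H)) ∘ₗ
          ((Coalgebra.comul (R := R) (A := H)).rTensor H) :=
      (LinearMap.lTensor_comp_rTensor _ _ _).symm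
    rw [hfact]
    have hco : ((Coalgebra.comul (R := R) (A := H)).rTensor H) ∘ₗ
        (Coalgebra.comul (R := R) (A := H)) =
        (TensorProduct.assoc R H H H).symm.toLinearMap ∘ₗ
          ((Coalgebra.comul (R := R) (A := H)).lTensor H) ∘ₗ
          (Coalgebra.comul (R := R) (A := H)) := by
      exact (Coalgebra.coassoc_symm (R := R) (A := H)).symm
    calc LinearMap.mul' R (H ⊗[R] H) ∘ₗ
        (((antiComul (R := R) (H := H)).lTensor (H ⊗[R] H)) ∘ₗ
          ((Coalgebra.comul (R := R) (A := H)).rTensor H)) ∘ₗ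
          (Coalgebra.comul (R := R) (A := H))
        = (LinearMap.mul' R (H ⊗[R] H)) ∘ₗ ((antiComul (R := R) (H := H)).lTensor (H ⊗[R] H)) ∘ₗ
            (TensorProduct.assoc R H H H).symm.toLinearMap ∘ₗ
            ((Coalgebra.comul (R := R) (A := H)).lTensor H) ∘ₗ
            (Coalgebra.comul (R := R) (A := H)) := by
          rw [LinearMap.comp_assoc, hco]
      _ = (((TensorProduct.mk R H H).flip 1) ∘ₗ (LinearMap.mul' R H) ∘ₗ
            ((HopfAlgebra.antipode (R := R) (A := H)).lTensor H)) ∘ₗ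
            (Coalgebra.comul (R := R) (A := H)) := by
          exact congrArg (fun m => m ∘ₗ (Coalgebra.comul (R := R) (A := H)))
            (key_lemma (R := R) (H := H))
      _ = convUnit := by
          ext x
          have hx := HopfAlgebra.mul_antipode_lTensor_comul_apply (R := R) (A := H) x
          simp only [LinearMap.comp_apply, hx, convUnit_apply,
            Algebra.TensorProduct.algebraMap_apply, TensorProduct.mk_apply,
            LinearMap.flip_apply]

end Antipode

open Function

variable {k : Type*} [Field k]

section TensorInj
variable {M N P Q : Type*} [AddCommGroup M] [AddCommGroup N] [AddCommGroup P] [AddCommGroup Q]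
  [Module k M] [Module k N] [Module k P] [Module k Q]

lemma tmap_inj {f : M →ₗ[k] N} {g : P →ₗ[k] Q} (hf : Injective f) (hg : Injective g) :
    Injective (TensorProduct.map f g) := by
  rw [← LinearMap.rTensor_comp_lTensor]
  exact (Module.Flat.rTensor_preserves_injective_linearMap f hf).comp
    (Module.Flat.lTensor_preserves_injective_linearMap g hg)

end TensorInj

section SubHopf

variable {H : Type*} [Ring H] [HopfAlgebra k H] (A : Subalgebra k H)

noncomputable def iA : ↥A →ₗ[k] H := A.val.toLinearMap

lemma iA_apply (x : ↥A) : iA A x = (x : H) := rfl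

lemma iA_inj : Injective (iA A) := Subtype.val_injective

noncomputable def jA : (↥A ⊗[k] ↥A) →ₗ[k] H ⊗[k] H := TensorProduct.map (iA A) (iA A)

@[simp] lemma jA_tmul (x y : ↥A) : jA A (x ⊗ₜ[k] y) = (x : H) ⊗ₜ[k] (y : H) := rfl

lemma jA_inj : Injective (jA A) := tmap_inj (iA_inj A) (iA_inj A)

lemma jA_algHom : (Algebra.TensorProduct.map A.val A.val).toLinearMap = jA A :=
  TensorProduct.ext' fun x y => rfl

lemma jA_one : jA A 1 = 1 := by
  rw [← jA_algHom]
  exact map_one (Algebra.TensorProduct.map A.val A.val)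

lemma jA_mul (t s : ↥A ⊗[k] ↥A) : jA A (t * s) = jA A t * jA A s := by
  rw [← jA_algHom]
  exact map_mul (Algebra.TensorProduct.map A.val A.val) t s

/-- Comultiplication on a subalgebra that is also a subcoalgebra. -/
noncomputable def comulA
    (hA : ∀ x : ↥A, Coalgebra.comul (R := k) (x : H) ∈ LinearMap.range (jA A)) :
    ↥A →ₗ[k] ↥A ⊗[k] ↥A :=
  (LinearEquiv.ofInjective (jA A) (jA_inj A)).symm.toLinearMap ∘ₗ
    LinearMap.codRestrict (LinearMap.range (jA A)) (Coalgebra.comul ∘ₗ iA A) hA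

lemma jA_comulA (hA : ∀ x : ↥A, Coalgebra.comul (R := k) (x : H) ∈ LinearMap.range (jA A))
    (x : ↥A) : jA A (comulA A hA x) = Coalgebra.comul (R := k) (x : H) := by
  rw [comulA]
  simp only [LinearMap.comp_apply, LinearEquiv.coe_toLinearMap]
  have h1 : ∀ y : LinearMap.range (jA A),
      jA A ((LinearEquiv.ofInjective (jA A) (jA_inj A)).symm y) = (y : H ⊗[k] H) := by
    intro y
    conv_rhs => rw [← (LinearEquiv.ofInjective (jA A) (jA_inj A)).apply_symm_apply y]
    rfl
  rw [h1]
  rfl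

lemma jA_comulA_comp (hA : ∀ x : ↥A, Coalgebra.comul (R := k) (x : H) ∈ LinearMap.range (jA A)) :
    (jA A) ∘ₗ comulA A hA = Coalgebra.comul ∘ₗ iA A :=
  LinearMap.ext (jA_comulA A hA)

noncomputable def counitA : ↥A →ₗ[k] k := Coalgebra.counit ∘ₗ iA A

lemma counitA_apply (x : ↥A) : counitA A x = Coalgebra.counit (R := k) (x : H) := rfl


lemma map_comulA (hA : ∀ x : ↥A, Coalgebra.comul (R := k) (x : H) ∈ LinearMap.range (jA A))
    (x : ↥A) : TensorProduct.map (iA A) (iA A) (comulA A hA x) = Coalgebra.comul (R := k) (x : H) :=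
  jA_comulA A hA x

/-- The coalgebra structure on a subalgebra-subcoalgebra. -/
noncomputable def subCoalgebra
    (hA : ∀ x : ↥A, Coalgebra.comul (R := k) (x : H) ∈ LinearMap.range (jA A)) :
    Coalgebra k ↥A where
  comul := comulA A hA
  counit := counitA A
  coassoc := by
    apply LinearMap.ext
    intro x
    apply tmap_inj (iA_inj A) (jA_inj A)
    show TensorProduct.map (iA A) (TensorProduct.map (iA A) (iA A)) _ =
      TensorProduct.map (iA A) (TensorProduct.map (iA A) (iA A)) _
    have h1 : TensorProduct.map (iA A) (TensorProduct.map (iA A) (iA A)) ∘ₗ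
        (comulA A hA).lTensor ↥A =
        (Coalgebra.comul (R := k) (A := H)).lTensor H ∘ₗ TensorProduct.map (iA A) (iA A) :=
      TensorProduct.ext' fun p q => by
        simp only [LinearMap.comp_apply, TensorProduct.map_tmul, LinearMap.lTensor_tmul,
          map_comulA]
        rfl
    have h2 : TensorProduct.map (TensorProduct.map (iA A) (iA A)) (iA A) ∘ₗ
        (comulA A hA).rTensor ↥A =
        (Coalgebra.comul (R := k) (A := H)).rTensor H ∘ₗ TensorProduct.map (iA A) (iA A) :=
      TensorProduct.ext' fun p q => by
        simp only [LinearMap.comp_apply, TensorProduct.map_tmul, LinearMap.rTensor_tmul,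
          map_comulA]
        rfl
    have e1 := LinearMap.congr_fun h1 (comulA A hA x)
    have e2 := LinearMap.congr_fun h2 (comulA A hA x)
    simp only [LinearMap.comp_apply] at e1 e2
    show TensorProduct.map (iA A) (TensorProduct.map (iA A) (iA A))
        ((TensorProduct.assoc k ↥A ↥A ↥A) (((comulA A hA).rTensor ↥A) (comulA A hA x))) =
      TensorProduct.map (iA A) (TensorProduct.map (iA A) (iA A))
        (((comulA A hA).lTensor ↥A) (comulA A hA x))
    rw [TensorProduct.map_map_assoc, e2, map_comulA, Coalgebra.coassoc_apply, e1, map_comulA]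
  rTensor_counit_comp_comul := by
    apply LinearMap.ext
    intro x
    apply tmap_inj (f := LinearMap.id (R := k) (M := k)) (fun a b h => h) (iA_inj A)
    have h1 : TensorProduct.map LinearMap.id (iA A) ∘ₗ (counitA A).rTensor ↥A =
        (Coalgebra.counit (R := k) (A := H)).rTensor H ∘ₗ TensorProduct.map (iA A) (iA A) :=
      TensorProduct.ext' fun p q => by
        simp only [LinearMap.comp_apply, TensorProduct.map_tmul, LinearMap.rTensor_tmul,
          LinearMap.id_apply, counitA_apply]
        rfl
    have e1 := LinearMap.congr_fun h1 (comulA A hA x)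
    simp only [LinearMap.comp_apply] at e1
    show TensorProduct.map LinearMap.id (iA A) (((counitA A).rTensor ↥A) (comulA A hA x)) =
      TensorProduct.map LinearMap.id (iA A) ((TensorProduct.mk k k ↥A) 1 x)
    rw [e1, map_comulA, Coalgebra.rTensor_counit_comul]
    rfl
  lTensor_counit_comp_comul := by
    apply LinearMap.ext
    intro x
    apply tmap_inj (g := LinearMap.id (R := k) (M := k)) (iA_inj A) (fun a b h => h)
    have h1 : TensorProduct.map (iA A) LinearMap.id ∘ₗ (counitA A).lTensor ↥A =
        (Coalgebra.counit (R := k) (A := H)).lTensor H ∘ₗ TensorProduct.map (iA A) (iA A) :=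
      TensorProduct.ext' fun p q => by
        simp only [LinearMap.comp_apply, TensorProduct.map_tmul, LinearMap.lTensor_tmul,
          LinearMap.id_apply, counitA_apply]
        rfl
    have e1 := LinearMap.congr_fun h1 (comulA A hA x)
    simp only [LinearMap.comp_apply] at e1
    show TensorProduct.map (iA A) LinearMap.id (((counitA A).lTensor ↥A) (comulA A hA x)) =
      TensorProduct.map (iA A) LinearMap.id (((TensorProduct.mk k ↥A k).flip 1) x)
    rw [e1, map_comulA, Coalgebra.lTensor_counit_comul]
    rfl

/-- Bialgebra structure on a subalgebra-subcoalgebra. -/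
noncomputable def subBialgebra
    (hA : ∀ x : ↥A, Coalgebra.comul (R := k) (x : H) ∈ LinearMap.range (jA A)) :
    Bialgebra k ↥A :=
  letI : Coalgebra k ↥A := subCoalgebra A hA
  Bialgebra.mk' k ↥A
    (by show counitA A 1 = 1
        rw [counitA_apply]
        exact (OneMemClass.coe_one A) ▸ Bialgebra.counit_one (R := k) (A := H))
    (fun {a b} => by
        show counitA A (a * b) = counitA A a * counitA A b
        rw [counitA_apply, counitA_apply, counitA_apply]
        exact (MulMemClass.coe_mul A a b) ▸ Bialgebra.counit_mul (a : H) (b : H))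
    (by show comulA A hA 1 = 1
        apply jA_inj A
        rw [jA_comulA, jA_one]
        exact (OneMemClass.coe_one A) ▸ Bialgebra.comul_one (R := k) (A := H))
    (fun {a b} => by
        show comulA A hA (a * b) = comulA A hA a * comulA A hA b
        apply jA_inj A
        rw [jA_comulA, jA_mul, jA_comulA, jA_comulA]
        exact (MulMemClass.coe_mul A a b) ▸ Bialgebra.comul_mul (a : H) (b : H))

/-- The antipode restricted to a stable subalgebra. -/
noncomputable def antipodeA (hS : ∀ x : ↥A, HopfAlgebra.antipode (R := k) (x : H) ∈ A) :
    ↥A →ₗ[k] ↥A where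
  toFun x := ⟨HopfAlgebra.antipode (R := k) (x : H), hS x⟩
  map_add' x y := by ext; simp
  map_smul' c x := by ext; simp

lemma iA_antipodeA (hS : ∀ x : ↥A, HopfAlgebra.antipode (R := k) (x : H) ∈ A) (x : ↥A) :
    iA A (antipodeA A hS x) = HopfAlgebra.antipode (R := k) (x : H) := rfl

/-- Hopf algebra structure on an antipode-stable subalgebra-subcoalgebra. -/
noncomputable def subHopf
    (hA : ∀ x : ↥A, Coalgebra.comul (R := k) (x : H) ∈ LinearMap.range (jA A))
    (hS : ∀ x : ↥A, HopfAlgebra.antipode (R := k) (x : H) ∈ A) :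
    HopfAlgebra k ↥A :=
  letI : Bialgebra k ↥A := subBialgebra A hA
  { antipode := antipodeA A hS
    mul_antipode_rTensor_comul := by
      apply LinearMap.ext
      intro x
      apply iA_inj A
      have h0 : iA A ∘ₗ LinearMap.mul' k ↥A = LinearMap.mul' k H ∘ₗ jA A :=
        TensorProduct.ext' fun p q => rfl
      have h1 : jA A ∘ₗ (antipodeA A hS).rTensor ↥A =
          (HopfAlgebra.antipode (R := k) (A := H)).rTensor H ∘ₗ jA A :=
        TensorProduct.ext' fun p q => rfl
      show iA A (LinearMap.mul' k ↥A (((antipodeA A hS).rTensor ↥A) (comulA A hA x))) =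
        iA A ((Algebra.linearMap k ↥A) (counitA A x))
      rw [← LinearMap.comp_apply, h0, LinearMap.comp_apply, ← LinearMap.comp_apply (jA A), h1,
        LinearMap.comp_apply, jA_comulA, HopfAlgebra.mul_antipode_rTensor_comul_apply]
      simp [iA_apply, counitA_apply]
    mul_antipode_lTensor_comul := by
      apply LinearMap.ext
      intro x
      apply iA_inj A
      have h0 : iA A ∘ₗ LinearMap.mul' k ↥A = LinearMap.mul' k H ∘ₗ jA A :=
        TensorProduct.ext' fun p q => rfl
      have h1 : jA A ∘ₗ (antipodeA A hS).lTensor ↥A =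
          (HopfAlgebra.antipode (R := k) (A := H)).lTensor H ∘ₗ jA A :=
        TensorProduct.ext' fun p q => rfl
      show iA A (LinearMap.mul' k ↥A (((antipodeA A hS).lTensor ↥A) (comulA A hA x))) =
        iA A ((Algebra.linearMap k ↥A) (counitA A x))
      rw [← LinearMap.comp_apply, h0, LinearMap.comp_apply, ← LinearMap.comp_apply (jA A), h1,
        LinearMap.comp_apply, jA_comulA, HopfAlgebra.mul_antipode_lTensor_comul_apply]
      simp [iA_apply, counitA_apply] }

end SubHopf


section Equalizer

variable {k : Type u} [Field k] {H K : Type v} [Ring H] [Ring K]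
  [HopfAlgebra k H] [HopfAlgebra k K]

lemma range_map_subtype_mono {V W : Submodule k H} (hVW : V ≤ W) :
    LinearMap.range (TensorProduct.map V.subtype V.subtype) ≤
      LinearMap.range (TensorProduct.map W.subtype W.subtype) := by
  rintro x ⟨t, rfl⟩
  refine ⟨TensorProduct.map (Submodule.inclusion hVW) (Submodule.inclusion hVW) t, ?_⟩
  rw [← LinearMap.comp_apply, ← TensorProduct.map_comp]
  rfl

variable (f g : H →ₐc[k] K)

/-- The set of subcoalgebras on which `f` and `g` agree. -/
def eqSet : Set (Submodule k H) := {V : Submodule k H | IsSubcoalgebra V ∧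
  V ≤ LinearMap.ker (f.toCoalgHom.toLinearMap - g.toCoalgHom.toLinearMap)}

lemma mem_ker_phi_iff (x : H) :
    x ∈ LinearMap.ker (f.toCoalgHom.toLinearMap - g.toCoalgHom.toLinearMap) ↔ f x = g x := by
  rw [LinearMap.mem_ker, LinearMap.sub_apply, sub_eq_zero]
  rfl

lemma bot_mem_eqSet : ⊥ ∈ eqSet f g := by
  constructor
  · intro v hv
    rw [Submodule.mem_bot] at hv
    subst hv
    rw [map_zero]
    exact zero_mem _
  · exact bot_le

lemma sup_mem_eqSet {V W : Submodule k H} (hV : V ∈ eqSet f g) (hW : W ∈ eqSet f g) :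
    V ⊔ W ∈ eqSet f g := by
  constructor
  · intro v hv
    rcases Submodule.mem_sup.mp hv with ⟨x, hx, y, hy, rfl⟩
    rw [map_add]
    exact add_mem (range_map_subtype_mono le_sup_left (hV.1 x hx))
      (range_map_subtype_mono le_sup_right (hW.1 y hy))
  · exact sup_le hV.2 hW.2

lemma mem_sSup_eqSet_iff (x : H) :
    x ∈ sSup (eqSet f g) ↔ ∃ V ∈ eqSet f g, x ∈ V :=
  Submodule.mem_sSup_of_directed ⟨⊥, bot_mem_eqSet f g⟩
    (fun V hV W hW => ⟨V ⊔ W, sup_mem_eqSet f g hV hW, le_sup_left, le_sup_right⟩)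

lemma isSubcoalgebra_sSup_eqSet : IsSubcoalgebra (sSup (eqSet f g)) := by
  intro v hv
  obtain ⟨V, hV, hvV⟩ := (mem_sSup_eqSet_iff f g v).mp hv
  exact range_map_subtype_mono (le_sSup hV) (hV.1 v hvV)

lemma one_mem_sSup_eqSet : (1 : H) ∈ sSup (eqSet f g) := by
  have hm : (Submodule.span k {(1 : H)}) ∈ eqSet f g := by
    constructor
    · intro v hv
      obtain ⟨r, rfl⟩ := Submodule.mem_span_singleton.mp hv
      refine ⟨r • ((⟨1, Submodule.mem_span_singleton_self 1⟩ : Submodule.span k {(1 : H)}) ⊗ₜ[k]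
        (⟨1, Submodule.mem_span_singleton_self 1⟩ : Submodule.span k {(1 : H)})), ?_⟩
      rw [map_smul, map_smul]
      congr 1
      rw [TensorProduct.map_tmul]
      have : Coalgebra.comul (R := k) (1 : H) = (1 : H ⊗[k] H) :=
        Bialgebra.comul_one (R := k) (A := H)
      rw [this, Algebra.TensorProduct.one_def]
      rfl
    · intro v hv
      obtain ⟨r, rfl⟩ := Submodule.mem_span_singleton.mp hv
      rw [mem_ker_phi_iff, map_smul, map_smul, map_one, map_one]
  exact (mem_sSup_eqSet_iff f g 1).mpr ⟨_, hm, Submodule.mem_span_singleton_self 1⟩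

lemma mul_tensor_range (V W : Submodule k H) (t : ↥V ⊗[k] ↥V) (s : ↥W ⊗[k] ↥W) :
    (TensorProduct.map V.subtype V.subtype t) * (TensorProduct.map W.subtype W.subtype s) ∈
      LinearMap.range (TensorProduct.map (V * W).subtype (V * W).subtype) := by
  induction t using TensorProduct.induction_on with
  | zero => rw [map_zero, zero_mul]; exact zero_mem _
  | add t1 t2 h1 h2 => rw [map_add, add_mul]; exact add_mem h1 h2
  | tmul a b =>
    induction s using TensorProduct.induction_on with
    | zero => rw [map_zero, mul_zero]; exact zero_mem _
    | add s1 s2 h1 h2 => rw [map_add, mul_add]; exact add_mem h1 h2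
    | tmul c d =>
      refine ⟨(⟨(a : H) * (c : H), Submodule.mul_mem_mul a.2 c.2⟩ : ↥(V * W)) ⊗ₜ[k]
        (⟨(b : H) * (d : H), Submodule.mul_mem_mul b.2 d.2⟩ : ↥(V * W)), ?_⟩
      rw [TensorProduct.map_tmul, TensorProduct.map_tmul, TensorProduct.map_tmul,
        Algebra.TensorProduct.tmul_mul_tmul]
      rfl

lemma mul_mem_eqSet {V W : Submodule k H} (hV : V ∈ eqSet f g) (hW : W ∈ eqSet f g) :
    V * W ∈ eqSet f g := by
  constructor
  · intro v hv
    refine Submodule.mul_induction_on hv (fun m hm n hn => ?_) (fun x y hx hy => ?_)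
    · rw [Bialgebra.comul_mul]
      obtain ⟨t, ht⟩ := hV.1 m hm
      obtain ⟨s, hs⟩ := hW.1 n hn
      rw [← ht, ← hs]
      exact mul_tensor_range V W t s
    · rw [map_add]; exact add_mem hx hy
  · intro v hv
    refine Submodule.mul_induction_on hv (fun m hm n hn => ?_) (fun x y hx hy => ?_)
    · rw [mem_ker_phi_iff, map_mul, map_mul,
        (mem_ker_phi_iff f g m).mp (hV.2 hm), (mem_ker_phi_iff f g n).mp (hW.2 hn)]
    · exact add_mem hx hy

lemma mul_mem_sSup_eqSet {x y : H} (hx : x ∈ sSup (eqSet f g)) (hy : y ∈ sSup (eqSet f g)) :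
    x * y ∈ sSup (eqSet f g) := by
  obtain ⟨V, hV, hxV⟩ := (mem_sSup_eqSet_iff f g x).mp hx
  obtain ⟨W, hW, hyW⟩ := (mem_sSup_eqSet_iff f g y).mp hy
  exact (mem_sSup_eqSet_iff f g _).mpr
    ⟨V * W, mul_mem_eqSet f g hV hW, Submodule.mul_mem_mul hxV hyW⟩

lemma map_antipode_mem_eqSet {V : Submodule k H} (hV : V ∈ eqSet f g) :
    V.map (HopfAlgebra.antipode (R := k) (A := H)) ∈ eqSet f g := by
  set Sm : H →ₗ[k] H := HopfAlgebra.antipode (R := k) (A := H) with hSm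
  set SV : Submodule k H := V.map Sm with hSV
  set S' : ↥V →ₗ[k] ↥SV :=
    LinearMap.codRestrict SV (Sm ∘ₗ V.subtype) (fun v => Submodule.mem_map_of_mem v.2) with hS'
  constructor
  · rintro v ⟨w, hw, rfl⟩
    have hc : Coalgebra.comul (R := k) (Sm w) =
        (TensorProduct.comm k H H) (TensorProduct.map Sm Sm (Coalgebra.comul w)) := by
      have := LinearMap.congr_fun (comul_antipode (R := k) (H := H)) w
      exact this
    obtain ⟨t, ht⟩ := hV.1 w hw
    rw [hc, ← ht]
    refine ⟨(TensorProduct.comm k ↥SV ↥SV) (TensorProduct.map S' S' t), ?_⟩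
    have h1 : TensorProduct.map SV.subtype SV.subtype ∘ₗ TensorProduct.map S' S' =
        TensorProduct.map Sm Sm ∘ₗ TensorProduct.map V.subtype V.subtype :=
      TensorProduct.ext' fun a b => rfl
    rw [TensorProduct.map_comm]
    rw [← LinearMap.comp_apply, h1, LinearMap.comp_apply]
  · rintro v ⟨w, hw, rfl⟩
    rw [mem_ker_phi_iff]
    have hfS := LinearMap.congr_fun (antipode_comp_bialgHom (R := k) f) w
    have hgS := LinearMap.congr_fun (antipode_comp_bialgHom (R := k) g) w
    simp only [LinearMap.comp_apply] at hfS hgS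
    have hw' : f w = g w := (mem_ker_phi_iff f g w).mp (hV.2 hw)
    show (f.toCoalgHom : H →ₗ[k] K) (Sm w) = (g.toCoalgHom : H →ₗ[k] K) (Sm w)
    rw [← hfS, ← hgS]
    show HopfAlgebra.antipode (R := k) (f w) = HopfAlgebra.antipode (R := k) (g w)
    rw [hw']

lemma antipode_mem_sSup_eqSet {x : H} (hx : x ∈ sSup (eqSet f g)) :
    HopfAlgebra.antipode (R := k) (A := H) x ∈ sSup (eqSet f g) := by
  obtain ⟨V, hV, hxV⟩ := (mem_sSup_eqSet_iff f g x).mp hx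
  exact (mem_sSup_eqSet_iff f g _).mpr
    ⟨_, map_antipode_mem_eqSet f g hV, Submodule.mem_map_of_mem hxV⟩

end Equalizer

/-- Let `f, g : H → K` be morphisms of Hopf algebras and let `D` be the sum of all
subcoalgebras of `H` contained in `S = {h | f h = g h}` (a Hopf subalgebra of `H`).
Then `(D, i)`, with `i` the canonical inclusion, is an equalizer of `f` and `g` in the
category of `k`-Hopf algebras: there is a Hopf algebra `D'` and an injective Hopf
algebra (i.e. bialgebra) map `i : D' → H` whose image is exactly `D`, such that
`f ∘ i = g ∘ i` and every Hopf algebra map `h : X → H` with `f ∘ h = g ∘ h` factors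
uniquely through `i`. -/
theorem sum_of_subcoalgebras_is_equalizer_hopf {k : Type u} [Field k] {H K : Type v}
    [Ring H] [Ring K] [HopfAlgebra k H] [HopfAlgebra k K]
    (f g : H →ₐc[k] K) (D : Submodule k H)
    (hD : D = sSup {V : Submodule k H | IsSubcoalgebra V ∧
      V ≤ LinearMap.ker (f.toCoalgHom.toLinearMap - g.toCoalgHom.toLinearMap)}) :
    ∃ (D' : Type v) (_ring : Ring D') (_hopf : HopfAlgebra k D') (i : D' →ₐc[k] H),
      Function.Injective ⇑i ∧
      Set.range ⇑i = (D : Set H) ∧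
      f.comp i = g.comp i ∧
      ∀ (X : Type w) [Ring X] [HopfAlgebra k X] (h : X →ₐc[k] H),
        f.comp h = g.comp h → ∃! h' : X →ₐc[k] D', i.comp h' = h := by
  subst hD
  set AD : Subalgebra k H := Submodule.toSubalgebra (sSup (eqSet f g))
    (one_mem_sSup_eqSet f g) (fun x y hx hy => mul_mem_sSup_eqSet f g hx hy) with hAD
  have hA : ∀ x : ↥AD, Coalgebra.comul (R := k) (x : H) ∈ LinearMap.range (jA AD) := by
    intro x
    obtain ⟨t, ht⟩ := isSubcoalgebra_sSup_eqSet f g (x : H) x.2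
    exact ⟨t, ht⟩
  have hS : ∀ x : ↥AD, HopfAlgebra.antipode (R := k) (A := H) (x : H) ∈ AD :=
    fun x => antipode_mem_sSup_eqSet f g x.2
  letI instH : HopfAlgebra k ↥AD := subHopf AD hA hS
  letI instC : Coalgebra k ↥AD := instH.toBialgebra.toCoalgebra
  have hcounit_comp : (Coalgebra.counit (R := k) (A := H)) ∘ₗ iA AD =
      (Coalgebra.counit (R := k) (A := ↥AD)) := rfl
  have hmap_comul : TensorProduct.map (iA AD) (iA AD) ∘ₗ (Coalgebra.comul (R := k) (A := ↥AD)) =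
      (Coalgebra.comul (R := k) (A := H)) ∘ₗ iA AD := jA_comulA_comp AD hA
  let iH : ↥AD →ₐc[k] H :=
    { toLinearMap := iA AD
      counit_comp := hcounit_comp
      map_comp_comul := hmap_comul
      map_one' := rfl
      map_mul' := fun x y => rfl }
  have hker : sSup (eqSet f g) ≤
      LinearMap.ker (f.toCoalgHom.toLinearMap - g.toCoalgHom.toLinearMap) :=
    sSup_le fun V hV => hV.2
  refine ⟨↥AD, inferInstance, instH, iH, ?_, ?_, ?_, ?_⟩
  · exact fun a b hab => Subtype.ext hab
  · ext x
    constructor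
    · rintro ⟨y, rfl⟩
      exact y.2
    · intro hx
      exact ⟨⟨x, hx⟩, rfl⟩
  · apply BialgHom.ext
    intro x
    show f (x : H) = g (x : H)
    exact (mem_ker_phi_iff f g (x : H)).mp (hker x.2)
  · intro X _ _ h hfg
    have hR : LinearMap.range (h.toCoalgHom : X →ₗ[k] H) ∈ eqSet f g := by
      constructor
      · rintro v ⟨x, rfl⟩
        have e2 : TensorProduct.map (h.toCoalgHom : X →ₗ[k] H) (h.toCoalgHom : X →ₗ[k] H) =
            TensorProduct.map (LinearMap.range (h.toCoalgHom : X →ₗ[k] H)).subtype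
                (LinearMap.range (h.toCoalgHom : X →ₗ[k] H)).subtype ∘ₗ
              TensorProduct.map (h.toCoalgHom : X →ₗ[k] H).rangeRestrict
                (h.toCoalgHom : X →ₗ[k] H).rangeRestrict :=
          TensorProduct.ext' fun a b => rfl
        have e3 : Coalgebra.comul (R := k) ((h.toCoalgHom : X →ₗ[k] H) x) =
            TensorProduct.map (h.toCoalgHom : X →ₗ[k] H) (h.toCoalgHom : X →ₗ[k] H)
              (Coalgebra.comul (R := k) x) :=
          (CoalgHomClass.map_comp_comul_apply h.toCoalgHom x).symm
        rw [e3, e2]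
        exact ⟨_, rfl⟩
      · rintro v ⟨x, rfl⟩
        rw [mem_ker_phi_iff]
        exact DFunLike.congr_fun hfg x
    have hmem : ∀ x : X, h x ∈ AD :=
      fun x => le_sSup hR (LinearMap.mem_range_self (h.toCoalgHom : X →ₗ[k] H) x)
    let hAlg : X →ₐ[k] ↥AD := AlgHom.codRestrict (AlgHomClass.toAlgHom h) AD hmem
    have hcc : (Coalgebra.counit (R := k) (A := ↥AD)) ∘ₗ hAlg.toLinearMap =
        (Coalgebra.counit (R := k) (A := X)) := by
      apply LinearMap.ext
      intro x
      show Coalgebra.counit (R := k) ((hAlg x : H)) = Coalgebra.counit (R := k) x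
      exact CoalgHomClass.counit_comp_apply h.toCoalgHom x
    have hmc : TensorProduct.map hAlg.toLinearMap hAlg.toLinearMap ∘ₗ
        (Coalgebra.comul (R := k) (A := X)) =
        (Coalgebra.comul (R := k) (A := ↥AD)) ∘ₗ hAlg.toLinearMap := by
      apply LinearMap.ext
      intro x
      apply jA_inj AD
      have e2 : (jA AD) ∘ₗ TensorProduct.map hAlg.toLinearMap hAlg.toLinearMap =
          TensorProduct.map (h.toCoalgHom : X →ₗ[k] H) (h.toCoalgHom : X →ₗ[k] H) :=
        TensorProduct.ext' fun a b => rfl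
      show jA AD (TensorProduct.map hAlg.toLinearMap hAlg.toLinearMap
          (Coalgebra.comul (R := k) x)) = jA AD (comulA AD hA (hAlg x))
      rw [jA_comulA, ← LinearMap.comp_apply, e2]
      exact CoalgHomClass.map_comp_comul_apply h.toCoalgHom x
    let h' : X →ₐc[k] ↥AD :=
      { toLinearMap := hAlg.toLinearMap
        counit_comp := hcc
        map_comp_comul := hmc
        map_one' := map_one hAlg
        map_mul' := map_mul hAlg }
    refine ⟨h', ?_, ?_⟩
    · apply BialgHom.ext
      intro x
      rfl
    · intro h₁ hh₁
      apply BialgHom.ext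
      intro x
      exact Subtype.ext (DFunLike.congr_fun hh₁ x)
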